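/- Let (R,B) be a ℤ-based rng. If χ₁, χ₂ : R_ℂ → ℂ are two characters with χ₁ ≠ χ₂, then Σ_{b∈B} χ₁(b)·χ₂(~b) = 0; moreover for every character χ one has Σ_{b∈B} χ(b)·χ(~b) ≠ 0. In other words, the rows of any s-matrix of (R,B) are pairwise orthogonal. -/

import Mathlib

open scoped BigOperators

section ZBasedAux

variable {n : ℕ} {A : Type*} [CommRing A] [Algebra ℂ A]
  (b : Module.Basis (Fin n) ℂ A) (N : Fin n → Fin n → Fin n → ℤ) (σ : Fin n → Fin n)

/-- The canonical functional `τ` of a ℤ-based rng. -/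
noncomputable def zTau : A →ₗ[ℂ] ℂ := ∑ m, (starRingEnd ℂ) (b.repr 1 m) • (b.coord m)

lemma zTau_basis (m : Fin n) : zTau b (b m) = (starRingEnd ℂ) (b.repr 1 m) := by
  simp [zTau, LinearMap.sum_apply, Module.Basis.coord_apply, Module.Basis.repr_self,
    Finsupp.single_apply, smul_eq_mul, eq_comm]

lemma zTau_pair (hmul : ∀ i j, b i * b j = ∑ m, (N i j m : ℂ) • b m)
    (hτ : ∀ i j, (∑ m, (starRingEnd ℂ) (b.repr 1 m) * (N (σ i) j m : ℂ)) =
      if i = j then (1 : ℂ) else 0) (i j : Fin n) :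
    zTau b (b (σ i) * b j) = if i = j then (1:ℂ) else 0 := by
  rw [hmul, map_sum, ← hτ i j]
  refine Finset.sum_congr rfl fun m _ => ?_
  rw [map_smul, zTau_basis, smul_eq_mul, mul_comm]

lemma zTau_repro (hmul : ∀ i j, b i * b j = ∑ m, (N i j m : ℂ) • b m)
    (hτ : ∀ i j, (∑ m, (starRingEnd ℂ) (b.repr 1 m) * (N (σ i) j m : ℂ)) =
      if i = j then (1 : ℂ) else 0) (x : A) :
    ∑ j, zTau b (b (σ j) * x) • b j = x := by
  conv_rhs => rw [← b.sum_repr x]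
  refine Finset.sum_congr rfl fun j _ => ?_
  congr 1
  conv_lhs => rw [← b.sum_repr x]
  rw [Finset.mul_sum, map_sum]
  simp only [mul_smul_comm, map_smul, zTau_pair b N σ hmul hτ, smul_eq_mul]
  simp [Finset.sum_ite_eq', eq_comm]

/-- The Casimir-element property. -/
lemma zCasimir (hmul : ∀ i j, b i * b j = ∑ m, (N i j m : ℂ) • b m)
    (hσ : ∀ i, σ (σ i) = i)
    (hτ : ∀ i j, (∑ m, (starRingEnd ℂ) (b.repr 1 m) * (N (σ i) j m : ℂ)) =
      if i = j then (1 : ℂ) else 0)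
    (χ : A →ₐ[ℂ] ℂ) (a : A) :
    ∑ i, χ (a * b i) • b (σ i) = ∑ i, χ (b i) • (b (σ i) * a) := by
  have hσinv : Function.Involutive σ := hσ
  have lhs_eq : ∑ i, χ (a * b i) • b (σ i)
      = ∑ i, ∑ j, (zTau b (b (σ j) * (a * b i)) * χ (b j)) • b (σ i) := by
    refine Finset.sum_congr rfl fun i _ => ?_
    rw [← Finset.sum_smul]
    congr 1
    conv_lhs => rw [← zTau_repro b N σ hmul hτ (a * b i)]
    rw [map_sum]
    simp [smul_eq_mul]
  have rhs_eq : ∑ i, χ (b i) • (b (σ i) * a)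
      = ∑ i, ∑ j, (χ (b i) * zTau b (b (σ j) * (b (σ i) * a))) • b j := by
    refine Finset.sum_congr rfl fun i _ => ?_
    conv_lhs => rw [← zTau_repro b N σ hmul hτ (b (σ i) * a)]
    rw [Finset.smul_sum]
    refine Finset.sum_congr rfl fun j _ => ?_
    rw [smul_smul]
  rw [lhs_eq, rhs_eq]
  rw [Fintype.sum_equiv (hσinv.toPerm σ)
    (fun i => ∑ j, (zTau b (b (σ j) * (a * b i)) * χ (b j)) • b (σ i))
    (fun i => ∑ j, (zTau b (b (σ j) * (a * b (σ i))) * χ (b j)) • b i)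
    (fun i => by simp [Function.Involutive.toPerm, hσ])]
  rw [Finset.sum_comm]
  refine Finset.sum_congr rfl fun j _ => Finset.sum_congr rfl fun i _ => ?_
  rw [mul_comm]
  congr 2
  ring_nf

lemma zKey (hmul : ∀ i j, b i * b j = ∑ m, (N i j m : ℂ) • b m) (u v : Fin n → ℂ) :
    (∑ i, u i • b i) * (∑ j, v j • b j)
      = ∑ m, (∑ i, ∑ j, u i * v j * (N i j m : ℂ)) • b m := by
  rw [Fintype.sum_mul_sum]
  simp_rw [smul_mul_smul_comm, hmul, Finset.smul_sum, smul_smul, Finset.sum_smul]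
  calc ∑ i, ∑ j, ∑ m, (u i * v j * (N i j m : ℂ)) • b m
      = ∑ i, ∑ m, ∑ j, (u i * v j * (N i j m : ℂ)) • b m :=
        Finset.sum_congr rfl fun i _ => Finset.sum_comm
    _ = ∑ m, ∑ i, ∑ j, (u i * v j * (N i j m : ℂ)) • b m := Finset.sum_comm

lemma zPairing (hmul : ∀ i j, b i * b j = ∑ m, (N i j m : ℂ) • b m)
    (hσ : ∀ i, σ (σ i) = i)
    (hτ : ∀ i j, (∑ m, (starRingEnd ℂ) (b.repr 1 m) * (N (σ i) j m : ℂ)) =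
      if i = j then (1 : ℂ) else 0) (u v : Fin n → ℂ) :
    zTau b ((∑ i, u i • b i) * (∑ j, v j • b j)) = ∑ i, u i * v (σ i) := by
  have hTij : ∀ i j, zTau b (b i * b j) = if σ i = j then 1 else 0 := by
    intro i j
    have := zTau_pair b N σ hmul hτ (σ i) j
    rwa [hσ i] at this
  rw [Fintype.sum_mul_sum, map_sum]
  refine Finset.sum_congr rfl fun i _ => ?_
  rw [map_sum]
  simp_rw [smul_mul_smul_comm, map_smul, hTij, smul_eq_mul, mul_ite, mul_one, mul_zero]
  simp

lemma zReidx (hσ : ∀ i, σ (σ i) = i) {M : Type*} [AddCommMonoid M] (f : Fin n → M) :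
    ∑ i, f (σ i) = ∑ i, f i := by
  have hσinv : Function.Involutive σ := hσ
  exact Equiv.sum_comp (hσinv.toPerm σ) f

/-- Positivity: a vanishing sum `∑ conj (z i) * z i` forces each `z i = 0`. -/
lemma zPos {m : ℕ} (z : Fin m → ℂ)
    (h : (∑ i, (starRingEnd ℂ) (z i) * z i) = 0) : ∀ i, z i = 0 := by
  have h' : (∑ i, ((Complex.normSq (z i) : ℝ) : ℂ)) = 0 := by
    simpa [Complex.normSq_eq_conj_mul_self] using h
  have h2 : (∑ i, Complex.normSq (z i)) = 0 := by
    exact_mod_cast h' ▸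
      (by push_cast; rfl : ((∑ i, Complex.normSq (z i) : ℝ) : ℂ)
        = ∑ i, ((Complex.normSq (z i) : ℝ) : ℂ))
  intro i
  have := (Finset.sum_eq_zero_iff_of_nonneg
    (fun j _ => Complex.normSq_nonneg (z j))).mp h2 i (Finset.mem_univ i)
  exact Complex.normSq_eq_zero.mp this

end ZBasedAux

/-- Orthogonality relations: if `χ₁ ≠ χ₂` are characters of
`R_ℂ` then `∑_{b ∈ B} χ₁(b) χ₂(~b) = 0`, and for every character `χ` one has
`∑_{b ∈ B} χ(b) χ(~b) ≠ 0`; i.e. the rows of any s-matrix are pairwise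
orthogonal. -/
theorem zBasedRng_character_orthogonality
    {n : ℕ} (A : Type*) [CommRing A] [Algebra ℂ A]
    (b : Module.Basis (Fin n) ℂ A) (N : Fin n → Fin n → Fin n → ℤ) (σ : Fin n → Fin n)
    (hmul : ∀ i j, b i * b j = ∑ m, (N i j m : ℂ) • b m)
    (hσ : ∀ i, σ (σ i) = i)
    (hσN : ∀ i j m, N (σ i) (σ j) m = N i j (σ m))
    (hτ : ∀ i j, (∑ m, (starRingEnd ℂ) (b.repr 1 m) * (N (σ i) j m : ℂ)) =
      if i = j then (1 : ℂ) else 0)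
    (he : ∀ j, (starRingEnd ℂ) (b.repr 1 (σ j)) = b.repr 1 j) :
    (∀ χ₁ χ₂ : A →ₐ[ℂ] ℂ, χ₁ ≠ χ₂ → (∑ i, χ₁ (b i) * χ₂ (b (σ i))) = 0) ∧
    (∀ χ : A →ₐ[ℂ] ℂ, (∑ i, χ (b i) * χ (b (σ i))) ≠ 0) := by
  -- some character value on the basis is nonzero
  have hex : ∀ χ : A →ₐ[ℂ] ℂ, ∃ k, χ (b k) ≠ 0 := by
    intro χ
    by_contra h
    push_neg at h
    have h1 : χ 1 = 0 := by
      conv_lhs => rw [← b.sum_repr 1]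
      rw [map_sum]
      simp [h]
    simp at h1
  constructor
  · -- first orthogonality relation
    intro χ₁ χ₂ hne
    obtain ⟨a, ha⟩ : ∃ a, χ₁ a ≠ χ₂ a := by
      by_contra h; push_neg at h; exact hne (AlgHom.ext h)
    have h := congrArg χ₂ (zCasimir b N σ hmul hσ hτ χ₁ a)
    rw [map_sum, map_sum] at h
    simp only [map_smul, smul_eq_mul, map_mul] at h
    have h2 : χ₁ a * (∑ i, χ₁ (b i) * χ₂ (b (σ i)))
        = χ₂ a * (∑ i, χ₁ (b i) * χ₂ (b (σ i))) := by
      rw [Finset.mul_sum, Finset.mul_sum]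
      calc ∑ i, χ₁ a * (χ₁ (b i) * χ₂ (b (σ i)))
          = ∑ i, χ₁ a * χ₁ (b i) * χ₂ (b (σ i)) :=
            Finset.sum_congr rfl fun i _ => by ring
        _ = ∑ i, χ₁ (b i) * (χ₂ (b (σ i)) * χ₂ a) := h
        _ = ∑ i, χ₂ a * (χ₁ (b i) * χ₂ (b (σ i))) :=
            Finset.sum_congr rfl fun i _ => by ring
    rcases mul_eq_zero.mp
        (by linear_combination h2 :
          (χ₁ a - χ₂ a) * (∑ i, χ₁ (b i) * χ₂ (b (σ i))) = 0) with h3 | h3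
    · exact absurd (sub_eq_zero.mp h3) ha
    · exact h3
  · -- second relation: ∑ χ(b i) χ(b (σ i)) ≠ 0
    intro χ hS
    -- coefficient functions
    set pc : Fin n → ℂ := fun j => χ (b (σ j)) with hpc
    set rc : Fin n → ℂ := fun j => (starRingEnd ℂ) (χ (b j)) with hrc
    set P : A := ∑ j, pc j • b j with hP
    set r : A := ∑ j, rc j • b j with hr
    -- the eigen-relation χ a • P = P * a
    have star : ∀ a : A, χ a • P = P * a := by
      intro a
      have h := zCasimir b N σ hmul hσ hτ χ a
      have hPform : ∑ i, χ (b i) • b (σ i) = P := by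
        rw [hP]
        rw [← zReidx σ hσ (fun i => χ (b i) • b (σ i))]
        simp [hσ, hpc]
      calc χ a • P = ∑ i, χ (a * b i) • b (σ i) := by
            rw [← hPform, Finset.smul_sum]
            refine Finset.sum_congr rfl fun i _ => ?_
            rw [smul_smul, map_mul]
        _ = ∑ i, χ (b i) • (b (σ i) * a) := h
        _ = P * a := by
            rw [← hPform, Finset.sum_mul]
            exact Finset.sum_congr rfl fun i _ => (smul_mul_assoc _ _ _).symm
    -- χ P = 0
    have hχP : χ P = 0 := by
      rw [hP, map_sum]
      rw [← hS]
      refine Finset.sum_congr rfl fun j _ => ?_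
      simp [hpc, mul_comm]
    -- P * P = 0
    have hPP : P * P = 0 := by
      rw [← star P, hχP, zero_smul]
    -- the element q = r * P and its coefficients
    set w : Fin n → ℂ := fun m => ∑ i, ∑ j, rc i * pc j * (N i j m : ℂ) with hw
    have hq : r * P = ∑ m, w m • b m := zKey b N hmul rc pc
    -- conjugate coefficients give P * r
    have hCw : ∀ m, (starRingEnd ℂ) (w (σ m)) = ∑ i, ∑ j, pc i * rc j * (N i j m : ℂ) := by
      intro m
      rw [hw]
      simp only [map_sum, map_mul]
      have : ∀ i j, (starRingEnd ℂ) ((N i j (σ m) : ℂ)) = ((N i j (σ m) : ℂ)) := by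
        intro i j; exact map_intCast (starRingEnd ℂ) _
      calc ∑ i, ∑ j, (starRingEnd ℂ) (rc i) * (starRingEnd ℂ) (pc j)
              * (starRingEnd ℂ) ((N i j (σ m) : ℂ))
          = ∑ i, ∑ j, (starRingEnd ℂ) (rc i) * (starRingEnd ℂ) (pc j)
              * ((N (σ i) (σ j) m : ℂ)) := by
            refine Finset.sum_congr rfl fun i _ => Finset.sum_congr rfl fun j _ => ?_
            rw [this, hσN]
        _ = ∑ i, ∑ j, (starRingEnd ℂ) (rc (σ i)) * (starRingEnd ℂ) (pc j)
              * ((N (σ (σ i)) (σ j) m : ℂ)) :=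
            (zReidx σ hσ (fun i => ∑ j, (starRingEnd ℂ) (rc i) * (starRingEnd ℂ) (pc j)
              * ((N (σ i) (σ j) m : ℂ)))).symm
        _ = ∑ i, ∑ j, (starRingEnd ℂ) (rc (σ i)) * (starRingEnd ℂ) (pc (σ j))
              * ((N (σ (σ i)) (σ (σ j)) m : ℂ)) :=
            Finset.sum_congr rfl fun i _ =>
              (zReidx σ hσ (fun j => (starRingEnd ℂ) (rc (σ i)) * (starRingEnd ℂ) (pc j)
                * ((N (σ (σ i)) (σ j) m : ℂ)))).symm
        _ = ∑ i, ∑ j, pc i * rc j * (N i j m : ℂ) := by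
            refine Finset.sum_congr rfl fun i _ => Finset.sum_congr rfl fun j _ => ?_
            simp [hσ, hpc, hrc]
    have hq' : (∑ m, (starRingEnd ℂ) (w (σ m)) • b m) = r * P := by
      calc (∑ m, (starRingEnd ℂ) (w (σ m)) • b m)
          = ∑ m, (∑ i, ∑ j, pc i * rc j * (N i j m : ℂ)) • b m := by
            exact Finset.sum_congr rfl fun m _ => by rw [hCw]
        _ = P * r := (zKey b N hmul pc rc).symm
        _ = r * P := mul_comm _ _
    -- q * q = 0
    have hqq : (r * P) * (r * P) = 0 := by
      rw [mul_mul_mul_comm, hPP, mul_zero]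
    -- τ of q'-times-q vanishes, forcing w = 0
    have hw0 : ∀ m, w m = 0 := by
      have h0 : zTau b ((∑ m, (starRingEnd ℂ) (w (σ m)) • b m) * (∑ m, w m • b m)) = 0 := by
        rw [hq', ← hq, hqq, map_zero]
      rw [zPairing b N σ hmul hσ hτ] at h0
      have h1 : (∑ i, (starRingEnd ℂ) (w i) * w i) = 0 := by
        rw [← zReidx σ hσ (fun i => (starRingEnd ℂ) (w i) * w i)]
        exact h0
      exact zPos w h1
    -- hence q = 0
    have hq0 : r * P = 0 := by
      rw [hq]
      exact Finset.sum_eq_zero fun m _ => by rw [hw0 m, zero_smul]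
    -- but τ (r * P) = ∑ |χ (b i)|² ≠ 0
    have hT : zTau b (r * P) = ∑ i, (starRingEnd ℂ) (χ (b i)) * χ (b i) := by
      rw [hr, hP, zPairing b N σ hmul hσ hτ]
      refine Finset.sum_congr rfl fun i _ => ?_
      simp [hrc, hpc, hσ]
    rw [hq0, map_zero] at hT
    obtain ⟨k, hk⟩ := hex χ
    exact hk (zPos _ hT.symm k)
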